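/- For any compact infinite metric space (A, ρ) and N ≥ 2: there exists an N-point best-packing configuration ω_N with η(ω_N, A) ≥ δ(ω_N) if and only if δ_N(A) = δ_{N+1}(A). -/
import Mathlib


open scoped BigOperators
open Filter Metric

set_option linter.unusedSectionVars false

/-- Separation distance of an `N`-point configuration. -/
noncomputable def sep {E : Type*} [MetricSpace E] {N : ℕ} (x : Fin N → E) : ℝ :=
  ⨅ p : {p : Fin N × Fin N // p.1 ≠ p.2}, dist (x p.1.1) (x p.1.2)

/-- Mesh norm (covering radius) of a configuration relative to a set `S`. -/
noncomputable def mesh {E : Type*} [MetricSpace E] {N : ℕ} (S : Set E) (x : Fin N → E) : ℝ :=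
  ⨆ y : S, ⨅ i, dist (y : E) (x i)

/-- `N`-point best-packing distance of the set `S`. -/
noncomputable def packDist {E : Type*} [MetricSpace E] (S : Set E) (N : ℕ) : ℝ :=
  ⨆ x : {x : Fin N → E // Function.Injective x ∧ ∀ i, x i ∈ S}, sep x.1

/-- Riesz `s`-energy of a configuration. -/
noncomputable def energy {E : Type*} [MetricSpace E] {N : ℕ} (s : ℝ) (x : Fin N → E) : ℝ :=
  ∑ i, ∑ j ∈ Finset.univ.filter (· ≠ i), dist (x i) (x j) ^ (-s)

/-- Minimal `N`-point Riesz `s`-energy of the set `S`. -/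
noncomputable def minEnergy {E : Type*} [MetricSpace E] (S : Set E) (N : ℕ) (s : ℝ) : ℝ :=
  ⨅ x : {x : Fin N → E // Function.Injective x ∧ ∀ i, x i ∈ S}, energy s x.1


section Aux
variable {E : Type*} [MetricSpace E] {N : ℕ}

lemma pair_nonempty (hN : 2 ≤ N) : Nonempty {p : Fin N × Fin N // p.1 ≠ p.2} :=
  ⟨⟨(⟨0, by omega⟩, ⟨1, by omega⟩), by simp [Prod.ext_iff, Fin.ext_iff]⟩⟩

lemma sep_eq_inf' [h : Nonempty {p : Fin N × Fin N // p.1 ≠ p.2}] (x : Fin N → E) :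
    sep x = Finset.univ.inf' Finset.univ_nonempty
      (fun p : {p : Fin N × Fin N // p.1 ≠ p.2} => dist (x p.1.1) (x p.1.2)) :=
  (Finset.inf'_univ_eq_ciInf _).symm

lemma sep_le_dist {x : Fin N → E} {i j : Fin N} (h : i ≠ j) :
    sep x ≤ dist (x i) (x j) := by
  haveI : Nonempty {p : Fin N × Fin N // p.1 ≠ p.2} := ⟨⟨(i, j), h⟩⟩
  rw [sep_eq_inf']
  exact Finset.inf'_le _ (Finset.mem_univ (⟨(i, j), h⟩ : {p : Fin N × Fin N // p.1 ≠ p.2}))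

lemma sep_pos (hN : 2 ≤ N) {x : Fin N → E} (hx : Function.Injective x) : 0 < sep x := by
  haveI := pair_nonempty hN
  rw [sep_eq_inf']
  rw [Finset.lt_inf'_iff]
  intro p _
  exact dist_pos.2 fun h => p.2 (hx h)

lemma le_sep {x : Fin N → E} {c : ℝ}
    (h : ∀ i j : Fin N, i ≠ j → c ≤ dist (x i) (x j)) (hN : 2 ≤ N) : c ≤ sep x := by
  haveI := pair_nonempty hN
  rw [sep_eq_inf', Finset.le_inf'_iff]
  exact fun p _ => h _ _ p.2

lemma sep_continuous (hN : 2 ≤ N) : Continuous (fun x : Fin N → E => sep x) := by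
  haveI := pair_nonempty hN
  have : (fun x : Fin N → E => sep x) = fun x => Finset.univ.inf' Finset.univ_nonempty
      (fun p : {p : Fin N × Fin N // p.1 ≠ p.2} => dist (x p.1.1) (x p.1.2)) := by
    funext x; exact sep_eq_inf' x
  rw [this]
  exact Continuous.finset_inf'_apply _ fun p _ =>
    ((continuous_apply _).dist (continuous_apply _))

end Aux

section Compact
variable {A : Type*} [MetricSpace A] [CompactSpace A] [Infinite A] {N : ℕ}

lemma exists_injective_cfg (N : ℕ) : ∃ x : Fin N → A, Function.Injective x :=
  ⟨(Infinite.natEmbedding A) ∘ Fin.val,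
    (Infinite.natEmbedding A).injective.comp Fin.val_injective⟩

lemma cfg_nonempty (N : ℕ) :
    Nonempty {x : Fin N → A // Function.Injective x ∧ ∀ i, x i ∈ (Set.univ : Set A)} := by
  obtain ⟨x, hx⟩ := exists_injective_cfg (A := A) N
  exact ⟨⟨x, hx, fun _ => trivial⟩⟩

lemma sep_le_diam (hN : 2 ≤ N) (x : Fin N → A) :
    sep x ≤ Metric.diam (Set.univ : Set A) := by
  obtain ⟨p⟩ := pair_nonempty (N := N) hN
  exact (sep_le_dist p.2).trans
    (Metric.dist_le_diam_of_mem isCompact_univ.isBounded trivial trivial)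

lemma packDist_bddAbove (hN : 2 ≤ N) :
    BddAbove (Set.range fun z : {x : Fin N → A // Function.Injective x ∧
      ∀ i, x i ∈ (Set.univ : Set A)} => sep z.1) := by
  refine ⟨Metric.diam (Set.univ : Set A), ?_⟩
  rintro _ ⟨z, rfl⟩
  exact sep_le_diam hN z.1

lemma sep_le_packDist (hN : 2 ≤ N) {x : Fin N → A} (hx : Function.Injective x) :
    sep x ≤ packDist (Set.univ : Set A) N :=
  le_ciSup (packDist_bddAbove hN)
    (⟨x, hx, fun _ => trivial⟩ : {x : Fin N → A // Function.Injective x ∧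
      ∀ i, x i ∈ (Set.univ : Set A)})

lemma exists_best (hN : 2 ≤ N) :
    ∃ x : Fin N → A, Function.Injective x ∧ sep x = packDist (Set.univ : Set A) N ∧
      ∀ y : Fin N → A, sep y ≤ sep x := by
  obtain ⟨x, -, hmax⟩ := isCompact_univ.exists_isMaxOn (Set.univ_nonempty)
    ((sep_continuous (E := A) hN).continuousOn)
  have hmax' : ∀ y : Fin N → A, sep y ≤ sep x := fun y => hmax (Set.mem_univ y)
  obtain ⟨f, hf⟩ := exists_injective_cfg (A := A) N
  have hxpos : 0 < sep x := lt_of_lt_of_le (sep_pos hN hf) (hmax' f)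
  have hinj : Function.Injective x := by
    intro i j hij
    by_contra hne
    have h0 : sep x ≤ dist (x i) (x j) := sep_le_dist hne
    rw [hij, dist_self] at h0
    exact absurd (lt_of_lt_of_le hxpos h0) (lt_irrefl 0)
  refine ⟨x, hinj, le_antisymm (sep_le_packDist hN hinj) ?_, hmax'⟩
  haveI := cfg_nonempty (A := A) N
  exact ciSup_le fun z => hmax' z.1

lemma sep_comp_castSucc_le {z : Fin (N + 1) → A} (hN : 2 ≤ N) :
    sep z ≤ sep (z ∘ Fin.castSucc) := by
  refine le_sep (fun i j hij => ?_) hN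
  exact sep_le_dist (fun h => hij (Fin.castSucc_injective N h))

lemma packDist_succ_le (hN : 2 ≤ N) :
    packDist (Set.univ : Set A) (N + 1) ≤ packDist (Set.univ : Set A) N := by
  haveI := cfg_nonempty (A := A) (N + 1)
  refine ciSup_le fun z => ?_
  refine (sep_comp_castSucc_le hN).trans (sep_le_packDist hN ?_)
  exact z.2.1.comp (Fin.castSucc_injective N)

end Compact

theorem stmt_19 {A : Type*} [MetricSpace A] [CompactSpace A] [Infinite A]
    (N : ℕ) (hN : 2 ≤ N) :
    (∃ x : Fin N → A, Function.Injective x ∧ sep x = packDist (Set.univ : Set A) N ∧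
        sep x ≤ mesh (Set.univ : Set A) x) ↔
      packDist (Set.univ : Set A) N = packDist (Set.univ : Set A) (N + 1) := by
  have hN1 : 2 ≤ N + 1 := by omega
  haveI : Nonempty (Fin N) := ⟨⟨0, by omega⟩⟩
  constructor
  · rintro ⟨x, hinj, hsep, hle⟩
    refine le_antisymm ?_ (packDist_succ_le hN)
    have hg : Continuous (fun y : A => ⨅ i, dist y (x i)) := by
      have heq : (fun y : A => ⨅ i, dist y (x i)) =
          fun y => Finset.univ.inf' Finset.univ_nonempty (fun i => dist y (x i)) := by
        funext y; exact (Finset.inf'_univ_eq_ciInf _).symm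
      rw [heq]
      exact Continuous.finset_inf'_apply _ fun i _ => continuous_id.dist continuous_const
    obtain ⟨y, -, hymax⟩ := isCompact_univ.exists_isMaxOn Set.univ_nonempty hg.continuousOn
    have hmesh_le : mesh (Set.univ : Set A) x ≤ ⨅ i, dist y (x i) := by
      haveI : Nonempty (↥(Set.univ : Set A)) := ⟨⟨y, trivial⟩⟩
      exact ciSup_le fun w => hymax (Set.mem_univ (w : A))
    have hxy : sep x ≤ ⨅ i, dist y (x i) := hle.trans hmesh_le
    have key : ∀ i : Fin N, sep x ≤ dist y (x i) := fun i =>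
      hxy.trans (ciInf_le (Set.finite_range _).bddBelow i)
    set z : Fin (N + 1) → A := Fin.snoc x y with hz
    have hsep_z : sep x ≤ sep z := by
      refine le_sep (fun i j hij => ?_) hN1
      rcases Fin.eq_castSucc_or_eq_last i with ⟨i', rfl⟩ | rfl <;>
        rcases Fin.eq_castSucc_or_eq_last j with ⟨j', rfl⟩ | rfl
      · have : i' ≠ j' := fun h => hij (by rw [h])
        simpa [hz, Fin.snoc_castSucc] using sep_le_dist this
      · simpa [hz, Fin.snoc_castSucc, Fin.snoc_last, dist_comm] using key i'
      · simpa [hz, Fin.snoc_castSucc, Fin.snoc_last] using key j'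
      · exact absurd rfl hij
    have hxpos : 0 < sep x := sep_pos hN hinj
    have hzinj : Function.Injective z := by
      intro i j hij
      by_contra hne
      have h0 : sep z ≤ dist (z i) (z j) := sep_le_dist hne
      rw [hij, dist_self] at h0
      exact absurd (lt_of_lt_of_le (lt_of_lt_of_le hxpos hsep_z) h0) (lt_irrefl 0)
    calc packDist (Set.univ : Set A) N = sep x := hsep.symm
      _ ≤ sep z := hsep_z
      _ ≤ packDist (Set.univ : Set A) (N + 1) := sep_le_packDist hN1 hzinj
  · intro h
    obtain ⟨z, hzinj, hzsep, -⟩ := exists_best (A := A) hN1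
    set x : Fin N → A := z ∘ Fin.castSucc with hx
    have hxinj : Function.Injective x := hzinj.comp (Fin.castSucc_injective N)
    have hxeq : sep x = packDist (Set.univ : Set A) N := by
      refine le_antisymm (sep_le_packDist hN hxinj) ?_
      calc packDist (Set.univ : Set A) N = packDist (Set.univ : Set A) (N + 1) := h
        _ = sep z := hzsep.symm
        _ ≤ sep x := sep_comp_castSucc_le hN
    refine ⟨x, hxinj, hxeq, ?_⟩
    have hyineq : sep z ≤ ⨅ i, dist (z (Fin.last N)) (x i) := by
      refine le_ciInf fun i => ?_
      exact sep_le_dist (Fin.ne_of_gt (Fin.castSucc_lt_last i))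
    have hmesh_ge : (⨅ i, dist (z (Fin.last N)) (x i)) ≤ mesh (Set.univ : Set A) x := by
      refine le_ciSup (f := fun y : ↥(Set.univ : Set A) => ⨅ i, dist (y : A) (x i)) ?_
        ⟨z (Fin.last N), trivial⟩
      refine ⟨Metric.diam (Set.univ : Set A), ?_⟩
      rintro _ ⟨w, rfl⟩
      exact (ciInf_le (Set.finite_range _).bddBelow ⟨0, by omega⟩).trans
        (Metric.dist_le_diam_of_mem isCompact_univ.isBounded trivial trivial)
    calc sep x = packDist (Set.univ : Set A) N := hxeq
      _ = sep z := by rw [h, hzsep]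
      _ ≤ ⨅ i, dist (z (Fin.last N)) (x i) := hyineq
      _ ≤ mesh (Set.univ : Set A) x := hmesh_ge
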